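/- Let w be a hyperbolic isometry of a euclidean space E with move-set U + μ in standard form (μ ≠ 0). Then Min(w) is the unique affine subspace B of E of dimension dim(U^⊥) that is stabilized by w and on which every point is moved by the same vector. -/

import Mathlib

open Module

/-- For a hyperbolic isometry `w` of a euclidean space, with move-set `U + μ` in
standard form (`μ ∈ U ᗮ` nonzero), the min-set `Min(w)` is the unique (nonempty)
affine subspace `B` of `E` of dimension `dim U ᗮ` that is stabilized by `w` and on
which every point is moved by the same vector. -/
theorem minSet_unique_stabilized_subspace
    {V E : Type*} [NormedAddCommGroup V] [InnerProductSpace ℝ V] [FiniteDimensional ℝ V]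
    [MetricSpace E] [NormedAddTorsor V E] (w : E ≃ᵢ E)
    (U : Submodule ℝ V) (μ : V) (hμ : μ ∈ Uᗮ) (hμ0 : μ ≠ 0)
    (hMov : {v : V | ∃ x : E, w x -ᵥ x = v} = (fun u => u + μ) '' (U : Set V)) :
    ∃ B : AffineSubspace ℝ E,
      (B : Set E) = {x : E | ∀ y : E, dist (w x) x ≤ dist (w y) y} ∧
      ((B : Set E).Nonempty ∧ finrank ℝ B.direction = finrank ℝ Uᗮ ∧
        w '' (B : Set E) = (B : Set E) ∧ ∃ ν : V, ∀ x ∈ B, w x -ᵥ x = ν) ∧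
      (∀ B' : AffineSubspace ℝ E,
        ((B' : Set E).Nonempty ∧ finrank ℝ B'.direction = finrank ℝ Uᗮ ∧
          w '' (B' : Set E) = (B' : Set E) ∧ ∃ ν : V, ∀ x ∈ B', w x -ᵥ x = ν) →
        B' = B) := by
  classical
  set φ := w.toRealAffineIsometryEquiv with hφdef
  have hφ : ∀ x : E, φ x = w x := fun x => congrFun (w.coeFn_toRealAffineIsometryEquiv) x
  set A := φ.linearIsometryEquiv with hAdef
  set g : V →ₗ[ℝ] V := A.toLinearEquiv.toLinearMap - LinearMap.id with hgdef
  have hg : ∀ v, g v = A v - v := fun v => rfl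
  set d : E → V := fun x => w x -ᵥ x with hddef
  have hdmem : ∀ x : E, d x ∈ {v : V | ∃ x : E, w x -ᵥ x = v} := fun x => ⟨x, rfl⟩
  have hdsub : ∀ x y : E, d x - d y = g (x -ᵥ y) := by
    intro x y
    have h := φ.map_vsub x y
    rw [hφ, hφ, ← hAdef] at h
    simp only [hddef, hg, h]
    exact vsub_sub_vsub_comm _ _ _ _
  have hdw : ∀ x : E, d (w x) = A (d x) := by
    intro x
    have h := φ.map_vsub (w x) x
    rw [hφ, hφ, ← hAdef] at h
    simp [hddef, h]
  -- a point moved by μ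
  obtain ⟨x₀, hx₀⟩ : ∃ x : E, w x -ᵥ x = μ := by
    have : μ ∈ {v : V | ∃ x : E, w x -ᵥ x = v} := by
      rw [hMov]; exact ⟨0, U.zero_mem, by simp⟩
    exact this
  have hdx₀ : d x₀ = μ := hx₀
  -- range g = U
  have hrange : LinearMap.range g = U := by
    ext v
    constructor
    · rintro ⟨u, rfl⟩
      have hmem : d ((u +ᵥ x₀)) ∈ {v : V | ∃ x : E, w x -ᵥ x = v} := hdmem _
      rw [hMov] at hmem
      obtain ⟨u', hu', heq⟩ := hmem
      have hdv : d (u +ᵥ x₀) = g u + μ := by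
        have := hdsub (u +ᵥ x₀) x₀
        rw [vadd_vsub] at this
        rw [← hdx₀]; linear_combination (norm := module) this
      rw [hdv] at heq
      have : g u = u' := by linear_combination (norm := module) -heq
      rw [this]; exact hu'
    · intro hv
      have hmem : (v + μ) ∈ {v : V | ∃ x : E, w x -ᵥ x = v} := by
        rw [hMov]; exact ⟨v, hv, rfl⟩
      obtain ⟨x, hx⟩ := hmem
      refine ⟨x -ᵥ x₀, ?_⟩
      have := hdsub x x₀
      have hdx : d x = v + μ := hx
      rw [hdx, hdx₀] at this
      rw [← this]; abel
  -- ker g = Uᗮ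
  have hkerle : LinearMap.ker g ≤ (LinearMap.range g)ᗮ := by
    intro v hv
    have hAv : A v = v := by
      have := (LinearMap.mem_ker).mp hv
      rw [hg] at this
      linear_combination (norm := module) this
    rintro _ ⟨u, rfl⟩
    rw [hg]
    have : (inner ℝ (A u) v : ℝ) = inner ℝ u v := by
      conv_lhs => rw [← hAv]
      exact A.inner_map_map u v
    rw [inner_sub_left, this]; ring
  have hker : LinearMap.ker g = Uᗮ := by
    have hfr : finrank ℝ (LinearMap.ker g) = finrank ℝ (LinearMap.range g)ᗮ := by
      have h1 := LinearMap.finrank_range_add_finrank_ker g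
      have h2 := Submodule.finrank_add_finrank_orthogonal (K := LinearMap.range g)
      omega
    rw [← hrange]
    exact Submodule.eq_of_le_of_finrank_eq hkerle hfr
  have hAμ : A μ = μ := by
    have h0 : μ ∈ LinearMap.ker g := by rw [hker]; exact hμ
    have := LinearMap.mem_ker.mp h0
    rw [hg] at this
    linear_combination (norm := module) this
  -- B
  set B := AffineSubspace.mk' x₀ Uᗮ with hBdef
  have hdirB : B.direction = Uᗮ := AffineSubspace.direction_mk' x₀ Uᗮ
  have hBset : (B : Set E) = {x : E | d x = μ} := by
    ext x
    simp only [hBdef, AffineSubspace.mem_coe, AffineSubspace.mem_mk', Set.mem_setOf_eq]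
    constructor
    · intro hx
      have h0 : g (x -ᵥ x₀) = 0 := by
        have : x -ᵥ x₀ ∈ LinearMap.ker g := by rw [hker]; exact hx
        exact this
      have := hdsub x x₀
      rw [h0, hdx₀, sub_eq_zero] at this
      exact this
    · intro hx
      rw [hker.symm, LinearMap.mem_ker, ← hdsub, hx, hdx₀, sub_self]
  -- displacement decomposition: d y = u + μ, u ∈ U
  have hdecomp : ∀ y : E, ∃ u ∈ U, d y = u + μ := by
    intro y
    have := hdmem y
    rw [hMov] at this
    obtain ⟨u, hu, heq⟩ := this
    exact ⟨u, hu, heq.symm⟩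
  have hnorm : ∀ u ∈ U, ‖μ‖ ≤ ‖u + μ‖ ∧ (‖u + μ‖ ≤ ‖μ‖ → u = 0) := by
    intro u hu
    have hinner : (inner ℝ u μ : ℝ) = 0 := hμ u hu
    have hsq : ‖u + μ‖ ^ 2 = ‖u‖ ^ 2 + ‖μ‖ ^ 2 := by
      rw [norm_add_sq_real, hinner]; ring
    constructor
    · nlinarith [norm_nonneg u, norm_nonneg μ, norm_nonneg (u + μ), sq_nonneg ‖u‖]
    · intro h
      have : ‖u‖ = 0 := by nlinarith [norm_nonneg u, norm_nonneg μ, norm_nonneg (u + μ)]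
      exact norm_eq_zero.mp this
  have hdist : ∀ y : E, dist (w y) y = ‖d y‖ := fun y => dist_eq_norm_vsub V _ _
  -- B = min set
  have hmin : (B : Set E) = {x : E | ∀ y : E, dist (w x) x ≤ dist (w y) y} := by
    rw [hBset]
    ext x
    simp only [Set.mem_setOf_eq]
    constructor
    · intro hx y
      rw [hdist, hdist, hx]
      obtain ⟨u, hu, hy⟩ := hdecomp y
      rw [hy]
      exact (hnorm u hu).1
    · intro hx
      obtain ⟨u, hu, hxd⟩ := hdecomp x
      have := hx x₀
      rw [hdist, hdist, hxd, hdx₀] at this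
      have hu0 := (hnorm u hu).2 this
      rw [hxd, hu0, zero_add]
  -- stabilized
  have hstab : ∀ (B'' : AffineSubspace ℝ E), (B'' : Set E) = {x : E | d x = μ} →
      w '' (B'' : Set E) = (B'' : Set E) := by
    intro B'' hB''
    rw [hB'']
    ext x
    simp only [Set.mem_image, Set.mem_setOf_eq]
    constructor
    · rintro ⟨y, hy, rfl⟩
      rw [hdw, hy, hAμ]
    · intro hx
      refine ⟨w.symm x, ?_, w.apply_symm_apply x⟩
      have h1 : d (w (w.symm x)) = A (d (w.symm x)) := hdw _
      rw [w.apply_symm_apply, hx] at h1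
      have : A (d (w.symm x)) = A μ := by rw [← h1, hAμ]
      exact A.injective this
  -- main
  refine ⟨B, hmin, ⟨⟨x₀, ?_⟩, by rw [hdirB], hstab B hBset, ⟨μ, ?_⟩⟩, ?_⟩
  · rw [hBset]; exact hdx₀
  · intro x hx
    have : x ∈ (B : Set E) := hx
    rw [hBset] at this
    exact this
  · rintro B' ⟨⟨p, hp⟩, hfr, hstab', ν, hν⟩
    -- ν = μ
    have hdp : d p = ν := hν p hp
    obtain ⟨u, hu, hνeq⟩ : ∃ u ∈ U, ν = u + μ := by
      obtain ⟨u, hu, h⟩ := hdecomp p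
      exact ⟨u, hu, by rw [← hdp, h]⟩
    have hwp : w p ∈ B' := by
      have : w p ∈ (B' : Set E) := by rw [← hstab']; exact ⟨p, hp, rfl⟩
      exact this
    have hAν : A ν = ν := by
      have h1 : d (w p) = ν := hν (w p) hwp
      rw [hdw, hdp] at h1
      exact h1
    have hνU : ν ∈ Uᗮ := by
      rw [← hker]
      rw [LinearMap.mem_ker, hg, hAν, sub_self]
    have hu0 : u = 0 := by
      have huU : u ∈ Uᗮ := by
        have : u = ν - μ := by rw [hνeq]; abel
        rw [this]; exact Uᗮ.sub_mem hνU hμ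
      have : (inner ℝ u u : ℝ) = 0 := huU u hu
      exact inner_self_eq_zero.mp this
    have hνμ : ν = μ := by rw [hνeq, hu0, zero_add]
    -- B' ⊆ B
    have hle : B' ≤ B := by
      intro x hx
      have : d x = μ := by rw [← hνμ]; exact hν x hx
      have : x ∈ (B : Set E) := by rw [hBset]; exact this
      exact this
    have hdirle : B'.direction ≤ B.direction := AffineSubspace.direction_le hle
    have hdireq : B'.direction = B.direction :=
      Submodule.eq_of_le_of_finrank_eq hdirle (by rw [hfr, hdirB])
    exact AffineSubspace.ext_of_direction_eq hdireq ⟨p, hp, hle hp⟩
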